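/- In the single-topic model with anchor words, assume P(W=e_k) ≤ 1 for all k and document length m ≥ 1/a_min. Then the second-moment matrix of normalized likelihood vectors satisfies E[ψ(x)ψ(x)^⊤/P(x)²] ⪰ (1 − 1/e)·I_K in the positive semidefinite order, where ψ(x)_k = P(x⁽²⁾=x | W=e_k) and x is drawn from the marginal μ₂. -/

import Mathlib

open Finset Matrix
open scoped Classical

/-- Second-moment lower bound for normalized likelihood vectors in the single-topic model
with anchor words: if each topic `k` has an anchor word with emission probability at least
`a_min` and the document length satisfies `m ≥ 1/a_min`, then
`E_{x∼μ₂}[ψ(x)ψ(x)^⊤ / P(x)²] ⪰ (1 − 1/e)·I_K`, where `ψ(x)_j = P(x | W = e_j)` and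
`P(x) = ∑_j P(W=e_j) ψ(x)_j` is the marginal document probability. -/
theorem stmt_16 {V : Type*} [Fintype V] {K m : ℕ} (O : V → Fin K → ℝ)
    (hO : ∀ v j, 0 ≤ O v j) (hOsum : ∀ j, ∑ v, O v j = 1)
    (qw : Fin K → ℝ) (hqw : ∀ j, 0 < qw j) (hqwle : ∀ j, qw j ≤ 1) (hqwsum : ∑ j, qw j = 1)
    (a : Fin K → V) (hanchor : ∀ k j, 0 < O (a k) j ↔ j = k)
    (amin : ℝ) (hamin : 0 < amin) (ha : ∀ k, amin ≤ O (a k) k)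
    (hm : 1 / amin ≤ (m : ℝ)) :
    Matrix.PosSemidef
      ((Matrix.of fun j j' : Fin K =>
          ∑ x : Fin m → V,
            if 0 < ∑ j'', qw j'' * ∏ i, O (x i) j'' then
              (∏ i, O (x i) j) * (∏ i, O (x i) j') /
                (∑ j'', qw j'' * ∏ i, O (x i) j'')
            else 0) -
        (1 - 1 / Real.exp 1) • (1 : Matrix (Fin K) (Fin K) ℝ)) := by
  classical
  set ψ : (Fin m → V) → Fin K → ℝ := fun x j => ∏ i, O (x i) j with hψdef
  set P : (Fin m → V) → ℝ := fun x => ∑ j'', qw j'' * ψ x j'' with hPdef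
  have hψnn : ∀ x j, 0 ≤ ψ x j := fun x j => Finset.prod_nonneg fun i _ => hO _ _
  -- if x contains anchor a k and j ≠ k then ψ x j = 0
  have hzero : ∀ (x : Fin m → V) (k j : Fin K), (∃ i, x i = a k) → j ≠ k → ψ x j = 0 := by
    intro x k j ⟨i, hi⟩ hjk
    refine Finset.prod_eq_zero (Finset.mem_univ i) ?_
    rw [hi]
    have h0 : ¬ 0 < O (a k) j := by rw [hanchor k j]; exact hjk
    have := hO (a k) j
    linarith [lt_or_eq_of_le this]
  rw [Matrix.posSemidef_iff_dotProduct_mulVec]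
  constructor
  · -- Hermitian
    ext j j'
    simp only [conjTranspose_apply, Matrix.sub_apply, Matrix.smul_apply, Matrix.one_apply,
      Matrix.of_apply, star_trivial, smul_eq_mul]
    have h1 : (∑ x : Fin m → V,
        if 0 < ∑ j'', qw j'' * ∏ i, O (x i) j'' then
          (∏ i, O (x i) j') * (∏ i, O (x i) j) / (∑ j'', qw j'' * ∏ i, O (x i) j'')
        else 0) = (∑ x : Fin m → V,
        if 0 < ∑ j'', qw j'' * ∏ i, O (x i) j'' then
          (∏ i, O (x i) j) * (∏ i, O (x i) j') / (∑ j'', qw j'' * ∏ i, O (x i) j'')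
        else 0) := by
      refine Finset.sum_congr rfl fun x _ => ?_
      split_ifs with h
      · ring
      · rfl
    rw [h1]
    by_cases hjj : j' = j
    · subst hjj; simp
    · have hjj' : ¬ (j = j') := fun h => hjj h.symm
      simp [hjj, hjj']
  · intro u
    simp only [star_trivial]
    -- expand the quadratic form
    have hquad : dotProduct u
        ((Matrix.of fun j j' : Fin K =>
          ∑ x : Fin m → V,
            if 0 < ∑ j'', qw j'' * ∏ i, O (x i) j'' then
              (∏ i, O (x i) j) * (∏ i, O (x i) j') /
                (∑ j'', qw j'' * ∏ i, O (x i) j'')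
            else 0) *ᵥ u)
        = ∑ x : Fin m → V,
            (if 0 < P x then (∑ j, u j * ψ x j) ^ 2 / P x else 0) := by
      simp only [dotProduct, Matrix.mulVec, dotProduct, Matrix.of_apply]
      calc ∑ j, u j * ∑ j', (∑ x : Fin m → V,
            if 0 < ∑ j'', qw j'' * ∏ i, O (x i) j'' then
              (∏ i, O (x i) j) * (∏ i, O (x i) j') / (∑ j'', qw j'' * ∏ i, O (x i) j'')
            else 0) * u j'
          = ∑ j, ∑ j', ∑ x : Fin m → V,
              u j * u j' * (if 0 < P x then ψ x j * ψ x j' / P x else 0) := by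
            refine Finset.sum_congr rfl fun j _ => ?_
            rw [Finset.mul_sum]
            refine Finset.sum_congr rfl fun j' _ => ?_
            rw [Finset.sum_mul, Finset.mul_sum]
            refine Finset.sum_congr rfl fun x _ => ?_
            show u j * ((if 0 < P x then ψ x j * ψ x j' / P x else 0) * u j') = _
            ring
        _ = ∑ j, ∑ x : Fin m → V, ∑ j',
              u j * u j' * (if 0 < P x then ψ x j * ψ x j' / P x else 0) :=
            Finset.sum_congr rfl fun j _ => Finset.sum_comm
        _ = ∑ x : Fin m → V, ∑ j, ∑ j',
              u j * u j' * (if 0 < P x then ψ x j * ψ x j' / P x else 0) :=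
            Finset.sum_comm
        _ = ∑ x : Fin m → V,
              (if 0 < P x then (∑ j, u j * ψ x j) ^ 2 / P x else 0) := by
            refine Finset.sum_congr rfl fun x _ => ?_
            by_cases hPx : 0 < P x
            · simp only [hPx, if_true]
              rw [sq, Finset.sum_mul_sum, Finset.sum_div]
              refine Finset.sum_congr rfl fun j _ => ?_
              rw [Finset.sum_div]
              refine Finset.sum_congr rfl fun j' _ => ?_
              ring
            · simp [hPx]
    rw [Matrix.sub_mulVec, dotProduct_sub, hquad]
    have hsmul : dotProduct u (((1 - 1 / Real.exp 1) • (1 : Matrix (Fin K) (Fin K) ℝ)) *ᵥ u)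
        = (1 - 1 / Real.exp 1) * ∑ j, u j ^ 2 := by
      simp only [Matrix.smul_mulVec, Matrix.one_mulVec, dotProduct, Pi.smul_apply,
        smul_eq_mul, Finset.mul_sum]
      exact Finset.sum_congr rfl fun j _ => by ring
    rw [hsmul, sub_nonneg, Finset.mul_sum]
    -- the per-anchor contribution
    set h : Fin K → (Fin m → V) → ℝ :=
      fun k x => if ∃ i, x i = a k then ψ x k else 0 with hhdef
    -- Lemma B : ∑ x, h k x ≥ 1 - 1/e
    have hB : ∀ k, 1 - 1 / Real.exp 1 ≤ ∑ x : Fin m → V, h k x := by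
      intro k
      have hOak1 : O (a k) k ≤ 1 := by
        rw [← hOsum k]
        exact Finset.single_le_sum (fun v _ => hO v k) (Finset.mem_univ (a k))
      have hsum1 : ∑ x : Fin m → V, ψ x k = 1 := by
        show ∑ x : Fin m → V, ∏ i, O (x i) k = 1
        rw [← Fintype.sum_pow (fun v => O v k) m, hOsum k, one_pow]
      have hcompl : ∑ x : Fin m → V, (if ∀ i, x i ≠ a k then ψ x k else 0)
          = (1 - O (a k) k) ^ m := by
        have key : ∀ x : Fin m → V, (if ∀ i, x i ≠ a k then ψ x k else 0)
            = ∏ i, (if x i = a k then 0 else O (x i) k) := by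
          intro x
          by_cases hx : ∀ i, x i ≠ a k
          · rw [if_pos hx]
            exact Finset.prod_congr rfl fun i _ => (if_neg (hx i)).symm
          · push_neg at hx
            obtain ⟨i, hi⟩ := hx
            rw [if_neg (by push_neg; exact ⟨i, hi⟩)]
            exact (Finset.prod_eq_zero (Finset.mem_univ i) (by rw [if_pos hi])).symm
        rw [Finset.sum_congr rfl fun x _ => key x,
          ← Fintype.sum_pow (fun v => if v = a k then 0 else O v k) m]
        congr 1
        have heq : ∑ v, (if v = a k then 0 else O v k)
            = ∑ v, (O v k - if v = a k then O v k else 0) := by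
          refine Finset.sum_congr rfl fun v _ => ?_
          split_ifs <;> ring
        rw [heq, Finset.sum_sub_distrib, hOsum k, Finset.sum_ite_eq' Finset.univ (a k)
          (fun v => O v k)]
        simp
      have hsplit : ∑ x : Fin m → V, h k x
          + ∑ x : Fin m → V, (if ∀ i, x i ≠ a k then ψ x k else 0) = 1 := by
        rw [← Finset.sum_add_distrib, ← hsum1]
        refine Finset.sum_congr rfl fun x _ => ?_
        show (if ∃ i, x i = a k then ψ x k else 0)
            + (if ∀ i, x i ≠ a k then ψ x k else 0) = ψ x k
        by_cases hx : ∃ i, x i = a k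
        · rw [if_pos hx, if_neg (by push_neg; obtain ⟨i, hi⟩ := hx; exact ⟨i, hi⟩), add_zero]
        · rw [if_neg hx, if_pos (by push_neg at hx; exact hx), zero_add]
      have h1 : (1 - O (a k) k) ^ m ≤ (1 - amin) ^ m :=
        pow_le_pow_left₀ (by linarith) (by linarith [ha k]) m
      have h2 : (1 - amin) ^ m ≤ Real.exp (-amin) ^ m := by
        refine pow_le_pow_left₀ (by linarith [ha k]) ?_ m
        linarith [Real.add_one_le_exp (-amin)]
      have h3 : Real.exp (-amin) ^ m = Real.exp (-(amin * m)) := by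
        rw [← Real.exp_nat_mul]
        ring_nf
      have h4 : Real.exp (-(amin * m)) ≤ Real.exp (-1) := by
        apply Real.exp_le_exp.mpr
        have : 1 ≤ amin * m := by
          rw [div_le_iff₀ hamin] at hm
          linarith
        linarith
      have h5 : Real.exp (-1) = 1 / Real.exp 1 := by
        rw [Real.exp_neg]; exact inv_eq_one_div _
      linarith
    -- Lemma A : pointwise bound
    have hA : ∀ x : Fin m → V, (∑ k, u k ^ 2 * h k x)
        ≤ (if 0 < P x then (∑ j, u j * ψ x j) ^ 2 / P x else 0) := by
      intro x
      by_cases hex : ∃ k, (∃ i, x i = a k) ∧ 0 < ψ x k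
      · obtain ⟨k, hkx, hkpos⟩ := hex
        have hψz : ∀ j, j ≠ k → ψ x j = 0 := fun j hj => hzero x k j hkx hj
        have hPeq : P x = qw k * ψ x k := by
          show ∑ j'', qw j'' * ψ x j'' = qw k * ψ x k
          rw [Finset.sum_eq_single k]
          · intro j _ hj; rw [hψz j hj]; ring
          · intro hk; exact absurd (Finset.mem_univ k) hk
        have hPpos : 0 < P x := by
          rw [hPeq]; exact mul_pos (hqw k) hkpos
        have hsum_eq : (∑ j, u j * ψ x j) = u k * ψ x k := by
          rw [Finset.sum_eq_single k]
          · intro j _ hj; rw [hψz j hj]; ring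
          · intro hk; exact absurd (Finset.mem_univ k) hk
        have hlhs : (∑ j, u j ^ 2 * h j x) = u k ^ 2 * ψ x k := by
          rw [Finset.sum_eq_single k]
          · show u k ^ 2 * (if ∃ i, x i = a k then ψ x k else 0) = u k ^ 2 * ψ x k
            rw [if_pos hkx]
          · intro j _ hj
            show u j ^ 2 * (if ∃ i, x i = a j then ψ x j else 0) = 0
            by_cases hjx : ∃ i, x i = a j
            · exfalso
              have := hzero x j k hjx (Ne.symm hj)
              linarith
            · rw [if_neg hjx]; ring
          · intro hk; exact absurd (Finset.mem_univ k) hk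
        rw [hlhs, if_pos hPpos, hsum_eq, hPeq]
        have hF : (u k * ψ x k) ^ 2 / (qw k * ψ x k) = u k ^ 2 * ψ x k / qw k := by
          have hq : qw k ≠ 0 := (hqw k).ne'
          have hpsne : ψ x k ≠ 0 := hkpos.ne'
          field_simp
        rw [hF, le_div_iff₀ (hqw k)]
        have : u k ^ 2 * ψ x k * qw k ≤ u k ^ 2 * ψ x k * 1 := by
          refine mul_le_mul_of_nonneg_left (hqwle k) ?_
          exact mul_nonneg (sq_nonneg _) (le_of_lt hkpos)
        linarith
      · push_neg at hex
        have hz : (∑ k, u k ^ 2 * h k x) = 0 := by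
          refine Finset.sum_eq_zero fun k _ => ?_
          show u k ^ 2 * (if ∃ i, x i = a k then ψ x k else 0) = 0
          by_cases hkx : ∃ i, x i = a k
          · rw [if_pos hkx]
            have h1 := hex k hkx
            have h2 := hψnn x k
            have : ψ x k = 0 := le_antisymm h1 h2
            rw [this]; ring
          · rw [if_neg hkx]; ring
        rw [hz]
        split_ifs with hPx
        · positivity
        · exact le_refl 0
    -- combine
    calc ∑ j, (1 - 1 / Real.exp 1) * u j ^ 2
        ≤ ∑ j, u j ^ 2 * ∑ x : Fin m → V, h j x := by
          refine Finset.sum_le_sum fun j _ => ?_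
          rw [mul_comm]
          exact mul_le_mul_of_nonneg_left (hB j) (sq_nonneg _)
      _ = ∑ x : Fin m → V, ∑ j, u j ^ 2 * h j x := by
          rw [← Finset.sum_comm]
          exact Finset.sum_congr rfl fun j _ => Finset.mul_sum _ _ _
      _ ≤ ∑ x : Fin m → V,
            (if 0 < P x then (∑ j, u j * ψ x j) ^ 2 / P x else 0) :=
          Finset.sum_le_sum fun x _ => hA x
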